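/- Let G be a group with the word metric coming from a finite generating set, let H be a subgroup of G, and let g ∈ G be an element of infinite order. If the cyclic subgroup ⟨g⟩ generated by g is coarsely contained in H, then there exists an integer n ≥ 1 such that gⁿ ∈ H. -/

import Mathlib

open Pointwise

/-- The word length of `g` with respect to the generating set `S`: the least `n` such that
`g` is a product of `n` elements of `S ∪ S⁻¹`. -/
noncomputable def wordLength {G : Type*} [Group G] (S : Set G) (g : G) : ℕ :=
  sInf {n : ℕ | g ∈ (S ∪ S⁻¹) ^ n}

/-- `dist` on `G` is the word metric coming from the finite generating set `S`. -/
def IsWordMetric {G : Type*} [Group G] [MetricSpace G] (S : Set G) : Prop :=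
  S.Finite ∧ Subgroup.closure S = ⊤ ∧
    ∀ g h : G, dist g h = (wordLength S (g⁻¹ * h) : ℝ)

/-- `A` is coarsely contained in `B`: some `r ≥ 0` works so that every point of `A` is within
distance `r` of some point of `B`. -/
def CoarselyContained {X : Type*} [MetricSpace X] (A B : Set X) : Prop :=
  ∃ r : ℝ, 0 ≤ r ∧ ∀ a ∈ A, ∃ b ∈ B, dist a b ≤ r

lemma list_prod_mem_pow {G : Type*} [Group G] {T : Set G} :
    ∀ (l : List G), (∀ y ∈ l, y ∈ T) → l.prod ∈ T ^ l.length := by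
  intro l
  induction l with
  | nil => intro _; simp [Set.mem_one]
  | cons a l ih =>
      intro h
      rw [List.prod_cons, List.length_cons, pow_succ']
      exact Set.mul_mem_mul (h a List.mem_cons_self) (ih fun y hy => h y (List.mem_cons_of_mem a hy))

lemma exists_mem_pow' {G : Type*} [Group G] {S : Set G} (hgen : Subgroup.closure S = ⊤)
    (x : G) : ∃ n, x ∈ (S ∪ S⁻¹) ^ n := by
  have hx : x ∈ Submonoid.closure (S ∪ S⁻¹) := by
    rw [← Subgroup.closure_toSubmonoid, hgen]; trivial
  obtain ⟨l, hl, hprod⟩ := Submonoid.exists_list_of_mem_closure hx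
  exact ⟨l.length, hprod ▸ list_prod_mem_pow l hl⟩

lemma set_pow_finite {G : Type*} [Group G] {T : Set G} (hT : T.Finite) (n : ℕ) :
    (T ^ n).Finite := by
  induction n with
  | zero => simpa using Set.finite_singleton (1 : G)
  | succ n ih => rw [pow_succ]; exact ih.mul hT


/-- If `g` has infinite order and the cyclic subgroup `⟨g⟩` is coarsely contained in the
subgroup `H`, then some positive power of `g` lies in `H`. -/
theorem exists_pow_mem_of_zpowers_coarselyContained {G : Type*} [Group G] [MetricSpace G]
    (S : Set G) (hS : IsWordMetric S) (H : Subgroup G) (g : G)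
    (hg : ∀ n : ℕ, 1 ≤ n → g ^ n ≠ 1)
    (hcc : CoarselyContained ((Subgroup.zpowers g : Subgroup G) : Set G) (H : Set G)) :
    ∃ n : ℕ, 1 ≤ n ∧ g ^ n ∈ H := by
  obtain ⟨hSfin, hgen, hdist⟩ := hS
  obtain ⟨r, hr, hcc⟩ := hcc
  -- for each k, pick h k ∈ H close to g^k
  have hchoice : ∀ k : ℕ, ∃ b ∈ (H : Set G), dist (g ^ k) b ≤ r := fun k =>
    hcc (g ^ k) ⟨k, by simp [zpow_natCast]⟩
  choose h hH hd using hchoice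
  set N : ℕ := ⌈r⌉₊ with hN
  set T : Set G := ⋃ n ∈ Finset.range (N + 1), (S ∪ S⁻¹) ^ n with hT
  have hTfin : T.Finite :=
    Set.Finite.biUnion (Finset.range (N + 1)).finite_toSet
      (fun n _ => set_pow_finite (hSfin.union hSfin.inv) n)
  set c : ℕ → G := fun k => (g ^ k)⁻¹ * h k with hc
  have hmaps : Set.MapsTo c Set.univ T := by
    intro k _
    have hwl : (wordLength S (c k) : ℝ) ≤ r := by
      rw [← hdist (g ^ k) (h k)]; exact hd k
    have hle : wordLength S (c k) ≤ N := by
      calc wordLength S (c k) = ⌈((wordLength S (c k) : ℝ))⌉₊ := by simp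
      _ ≤ N := Nat.ceil_mono hwl
    have hne : {n : ℕ | c k ∈ (S ∪ S⁻¹) ^ n}.Nonempty := exists_mem_pow' hgen (c k)
    have hmem : c k ∈ (S ∪ S⁻¹) ^ (wordLength S (c k)) := Nat.sInf_mem hne
    exact Set.mem_biUnion (Finset.mem_range.mpr (Nat.lt_succ_of_le hle)) hmem
  obtain ⟨a, -, b, -, hab, heq⟩ :=
    Set.infinite_univ.exists_ne_map_eq_of_mapsTo hmaps hTfin
  wlog hlt : a < b generalizing a b
  · exact this b a hab.symm heq.symm (by omega)
  refine ⟨b - a, by omega, ?_⟩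
  have : g ^ (b - a) = h b * (h a)⁻¹ := by
    have ha : h a = g ^ a * c a := by simp [hc]
    have hb : h b = g ^ b * c b := by simp [hc]
    rw [pow_sub g hlt.le, ha, hb, heq]
    group
  rw [this]
  exact H.mul_mem (hH b) (H.inv_mem (hH a))
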